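/- Let G be a stable graph with vertex set [n] with matching number ν(G) = m, where n ≥ 2m + 2, and let r := max{ i ≥ 0 : ν(G − [i]) = ν(G) − i } (where G − [0] = G). Then G is a subgraph of A^r_{n,m}, i.e., every edge {a, b} of G with a < b satisfies a ≤ r or b ≤ 2m − r + 1. -/

import Mathlib

open Finset

/-- `F₁ ≺ F₂`: same size, and the `i`-th smallest element of `F₁` is at most
the `i`-th smallest element of `F₂`. -/
def PrecS (A B : Finset ℕ) : Prop :=
  A.card = B.card ∧
    ∀ i, i < A.card → (A.sort (· ≤ ·)).getD i 0 ≤ (B.sort (· ≤ ·)).getD i 0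

/-- A family of subsets of `[n] = {1,…,n}` is stable (shifted). -/
def IsStable (n : ℕ) (F : Finset (Finset ℕ)) : Prop :=
  ∀ A B : Finset ℕ, A ⊆ Finset.Icc 1 n → B ∈ F → PrecS A B → A ∈ F

/-- Property `U(s, q)`: any `s` edges (repetitions allowed) have union of size at most `q`. -/
def HasU (F : Finset (Finset ℕ)) (s q : ℕ) : Prop :=
  ∀ f : Fin s → Finset ℕ, (∀ i, f i ∈ F) → (Finset.univ.biUnion f).card ≤ q

/-- Matching number: the maximum size of a set of pairwise disjoint edges of `F`. -/
def matchNum (F : Finset (Finset ℕ)) : ℕ :=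
  (F.powerset.filter fun M => ∀ a ∈ M, ∀ b ∈ M, a ≠ b → Disjoint a b).sup Finset.card

/-- Shadow of a 3-uniform family: all 2-element subsets of its edges. -/
def shadow2 (F : Finset (Finset ℕ)) : Finset (Finset ℕ) :=
  F.biUnion fun f => f.powersetCard 2

/-- Deletion of the first `i` vertices: edges disjoint from `[i] = {1,…,i}`. -/
def del (F : Finset (Finset ℕ)) (i : ℕ) : Finset (Finset ℕ) :=
  F.filter fun e => Disjoint e (Finset.Icc 1 i)


/-- Lemma 2.1: a stable graph with matching number m and
r = max { i : nu(G - [i]) = nu(G) - i } is a subgraph of A^r_{n,m}. -/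
lemma sort_pair' {x y : ℕ} (h : x < y) :
    Finset.sort ({x, y} : Finset ℕ) (· ≤ ·) = [x, y] := by
  rw [Finset.sort_insert (r := (· ≤ ·)) (by simp [h.le]) (by simp [h.ne]), Finset.sort_singleton]

lemma precS_pair {x1 y1 x2 y2 : ℕ} (h1 : x1 < y1) (h2 : x2 < y2)
    (hx : x1 ≤ x2) (hy : y1 ≤ y2) : PrecS {x1, y1} {x2, y2} := by
  refine ⟨by rw [Finset.card_pair h1.ne, Finset.card_pair h2.ne], ?_⟩
  intro i hi
  rw [Finset.card_pair h1.ne] at hi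
  rw [sort_pair' h1, sort_pair' h2]
  interval_cases i <;> simp [List.getD_cons_zero, List.getD_cons_succ] <;> assumption

lemma le_matchNum {F M : Finset (Finset ℕ)} (hM : M ⊆ F)
    (hd : ∀ a ∈ M, ∀ b ∈ M, a ≠ b → Disjoint a b) : M.card ≤ matchNum F :=
  Finset.le_sup (by simp only [Finset.mem_filter, Finset.mem_powerset]; exact ⟨hM, hd⟩)

lemma matchNum_exists (F : Finset (Finset ℕ)) :
    ∃ M, M ⊆ F ∧ (∀ a ∈ M, ∀ b ∈ M, a ≠ b → Disjoint a b) ∧ M.card = matchNum F := by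
  obtain ⟨M, hM, hc⟩ := Finset.exists_mem_eq_sup
    (F.powerset.filter fun M => ∀ a ∈ M, ∀ b ∈ M, a ≠ b → Disjoint a b)
    ⟨∅, by simp⟩ Finset.card
  rw [Finset.mem_filter, Finset.mem_powerset] at hM
  exact ⟨M, hM.1, hM.2, hc.symm⟩

lemma matchNum_mono {F F' : Finset (Finset ℕ)} (h : F ⊆ F') : matchNum F ≤ matchNum F' :=
  Finset.sup_mono (Finset.filter_subset_filter _ (Finset.powerset_mono.2 h))

theorem stable_subgraph_A (n m r : ℕ) (G : Finset (Finset ℕ))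
    (hG : ∀ e ∈ G, e ⊆ Finset.Icc 1 n ∧ e.card = 2)
    (hst : IsStable n G)
    (hnu : matchNum G = m)
    (hn : 2 * m + 2 ≤ n)
    (hr : matchNum (del G r) + r = m)
    (hrmax : ∀ i, matchNum (del G i) + i = m → i ≤ r) :
    ∀ e ∈ G, ∀ a ∈ e, ∀ b ∈ e, a < b → a ≤ r ∨ b ≤ 2 * m - r + 1 := by
  intro e he a ha b hb hab
  by_contra hcon
  push_neg at hcon
  obtain ⟨har, hbr⟩ := hcon
  obtain ⟨hesub, hecard⟩ := hG e he
  set k₀ := matchNum (del G r) with hk₀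
  have hrm : r ≤ m := by omega
  have hbn : b ≤ n := (Finset.mem_Icc.1 (hesub hb)).2
  -- e = {a, b}
  have he_eq : e = {a, b} := by
    refine (Finset.eq_of_subset_of_card_le ?_ ?_).symm
    · intro x hx
      simp only [Finset.mem_insert, Finset.mem_singleton] at hx
      rcases hx with rfl | rfl <;> assumption
    · rw [hecard, Finset.card_pair hab.ne]
  -- e₀ = {r+1, 2m-r+2} ∈ G
  set c := 2 * m - r + 2 with hc
  have hce : r + 1 < c := by omega
  have he₀ : ({r + 1, c} : Finset ℕ) ∈ G := by
    refine hst _ e ?_ he ?_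
    · intro x hx
      simp only [Finset.mem_insert, Finset.mem_singleton] at hx
      rcases hx with rfl | rfl <;> (rw [Finset.mem_Icc]; omega)
    · rw [he_eq]; exact precS_pair hce hab (by omega) (by omega)
  -- ν(del G (r+1)) = k₀
  set t := matchNum (del G (r + 1)) with ht
  have htub : t ≤ k₀ := by
    apply matchNum_mono
    intro f hf
    rw [del, Finset.mem_filter] at hf ⊢
    exact ⟨hf.1, hf.2.mono_right (Finset.Icc_subset_Icc_right (by omega))⟩
  have htlb : k₀ ≤ t + 1 := by
    obtain ⟨M₀, hM₀sub, hM₀d, hM₀card⟩ := matchNum_exists (del G r)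
    have hfilt : (M₀.filter fun f => r + 1 ∉ f) ⊆ del G (r + 1) := by
      intro f hf
      rw [Finset.mem_filter] at hf
      have hf1 := hM₀sub hf.1
      rw [del, Finset.mem_filter] at hf1 ⊢
      refine ⟨hf1.1, Finset.disjoint_left.2 fun x hx hx' => ?_⟩
      rw [Finset.mem_Icc] at hx'
      rcases Nat.lt_or_ge x (r + 1) with h' | h'
      · exact Finset.disjoint_left.1 hf1.2 hx (Finset.mem_Icc.2 ⟨hx'.1, by omega⟩)
      · have hx1 : x = r + 1 := by omega
        rw [hx1] at hx
        exact hf.2 hx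
    have h1 : (M₀.filter fun f => r + 1 ∈ f).card ≤ 1 := by
      rw [Finset.card_le_one]
      intro f hf g hg
      rw [Finset.mem_filter] at hf hg
      by_contra hne
      exact Finset.disjoint_left.1 (hM₀d f hf.1 g hg.1 hne) hf.2 hg.2
    have h2 : (M₀.filter fun f => r + 1 ∈ f).card
        + (M₀.filter fun f => r + 1 ∉ f).card = M₀.card :=
      Finset.card_filter_add_card_filter_not _
    have h3 : (M₀.filter fun f => r + 1 ∉ f).card ≤ t :=
      le_matchNum hfilt fun f hf g hg hne =>
        hM₀d f (Finset.filter_subset _ _ hf) g (Finset.filter_subset _ _ hg) hne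
    omega
  have htne : t + (r + 1) ≠ m := fun h => by have := hrmax (r + 1) h; omega
  have hteq : t = k₀ := by omega
  -- a matching M of size k₀ in del G (r+1)
  obtain ⟨M, hMsub, hMd, hMcard⟩ := matchNum_exists (del G (r + 1))
  rw [← ht, hteq] at hMcard
  have hMG : ∀ f ∈ M, f ∈ G ∧ f.card = 2 ∧ ∀ v ∈ f, r + 2 ≤ v := by
    intro f hf
    have := hMsub hf
    rw [del, Finset.mem_filter] at this
    refine ⟨this.1, (hG f this.1).2, fun v hv => ?_⟩
    have hv1 : 1 ≤ v := (Finset.mem_Icc.1 ((hG f this.1).1 hv)).1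
    have := Finset.disjoint_left.1 this.2 hv
    rw [Finset.mem_Icc] at this
    omega
  -- the support S
  set S := M.biUnion id with hS
  have hmemS : ∀ f ∈ M, ∀ v ∈ f, v ∈ S := fun f hf v hv =>
    Finset.mem_biUnion.2 ⟨f, hf, hv⟩
  have hSlb : ∀ v ∈ S, r + 2 ≤ v := by
    intro v hv
    obtain ⟨f, hf, hvf⟩ := Finset.mem_biUnion.1 hv
    exact (hMG f hf).2.2 v hvf
  have hScard : S.card = 2 * k₀ := by
    rw [hS, show M.biUnion id = M.biUnion (fun f => f) from rfl,
      Finset.card_biUnion (fun f hf g hg hne => hMd f hf g hg hne)]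
    rw [Finset.sum_congr rfl fun f hf => (hMG f hf).2.1, Finset.sum_const, smul_eq_mul,
      hMcard]
    ring
  -- the compressing map φ
  set φ : ℕ → ℕ := fun v => r + 1 + (S.filter (· ≤ v)).card with hφ
  have hφle : ∀ v ∈ S, φ v ≤ v := by
    intro v hv
    have hsub : S.filter (· ≤ v) ⊆ Finset.Icc (r + 2) v := by
      intro x hx
      rw [Finset.mem_filter] at hx
      exact Finset.mem_Icc.2 ⟨hSlb x hx.1, hx.2⟩
    have := Finset.card_le_card hsub
    rw [Nat.card_Icc] at this
    have hv2 := hSlb v hv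
    simp only [hφ]
    omega
  have hφmono : ∀ v ∈ S, ∀ w ∈ S, v < w → φ v < φ w := by
    intro v hv w hw hvw
    have hsub : S.filter (· ≤ v) ⊆ S.filter (· ≤ w) := by
      intro x hx
      rw [Finset.mem_filter] at hx ⊢
      exact ⟨hx.1, hx.2.trans hvw.le⟩
    have : S.filter (· ≤ v) ⊂ S.filter (· ≤ w) :=
      (Finset.ssubset_iff_of_subset hsub).2
        ⟨w, Finset.mem_filter.2 ⟨hw, le_refl _⟩,
          fun h => by have := (Finset.mem_filter.1 h).2; omega⟩
    have := Finset.card_lt_card this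
    simp only [hφ]
    omega
  have hφinj : ∀ v ∈ S, ∀ w ∈ S, φ v = φ w → v = w := by
    intro v hv w hw hvw
    rcases lt_trichotomy v w with h | h | h
    · exact absurd hvw (hφmono v hv w hw h).ne
    · exact h
    · exact absurd hvw.symm (hφmono w hw v hv h).ne
  have hφlb : ∀ v ∈ S, r + 2 ≤ φ v := by
    intro v hv
    have : v ∈ S.filter (· ≤ v) := Finset.mem_filter.2 ⟨hv, le_refl _⟩
    have := Finset.card_pos.2 ⟨v, this⟩
    simp only [hφ]
    omega
  have hφub : ∀ v ∈ S, φ v ≤ 2 * m - r + 1 := by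
    intro v hv
    have := Finset.card_le_card (Finset.filter_subset (· ≤ v) S)
    rw [hScard] at this
    simp only [hφ]
    omega
  -- the image matching M'
  set ψ : Finset ℕ → Finset ℕ := fun f => f.image φ with hψ
  have hψmem : ∀ f ∈ M, ∀ u ∈ ψ f, r + 2 ≤ u ∧ u ≤ 2 * m - r + 1 := by
    intro f hf u hu
    obtain ⟨v, hv, rfl⟩ := Finset.mem_image.1 hu
    exact ⟨hφlb v (hmemS f hf v hv), hφub v (hmemS f hf v hv)⟩
  have hψGkey : ∀ x y : ℕ, x < y → ({x, y} : Finset ℕ) ∈ M → ψ {x, y} ∈ del G r := by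
    intro x y hlt hf
    obtain ⟨hfG, hf2, hflb⟩ := hMG _ hf
    have hx : x ∈ S := hmemS _ hf x (by simp)
    have hy : y ∈ S := hmemS _ hf y (by simp)
    have hψf : ψ {x, y} = {φ x, φ y} := by simp [hψ]
    have hφxy : φ x < φ y := hφmono x hx y hy hlt
    rw [del, Finset.mem_filter, hψf]
    constructor
    · refine hst _ _ ?_ hfG (precS_pair hφxy hlt (hφle x hx) (hφle y hy))
      intro u hu
      simp only [Finset.mem_insert, Finset.mem_singleton] at hu
      have h1 := hφlb x hx; have h2 := hφub x hx
      have h3 := hφlb y hy; have h4 := hφub y hy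
      rcases hu with rfl | rfl <;> (rw [Finset.mem_Icc]; omega)
    · rw [Finset.disjoint_left]
      intro u hu hu'
      rw [Finset.mem_Icc] at hu'
      simp only [Finset.mem_insert, Finset.mem_singleton] at hu
      have h1 := hφlb x hx; have h3 := hφlb y hy
      rcases hu with rfl | rfl <;> omega
  have hψG : ∀ f ∈ M, ψ f ∈ del G r := by
    intro f hf
    obtain ⟨x, y, hxy, rfl⟩ := Finset.card_eq_two.1 (hMG f hf).2.1
    rcases hxy.lt_or_gt with h | h
    · exact hψGkey x y h hf
    · rw [Finset.pair_comm] at hf ⊢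
      exact hψGkey y x h hf
  have hψdisj : ∀ f ∈ M, ∀ g ∈ M, f ≠ g → Disjoint (ψ f) (ψ g) := by
    intro f hf g hg hne
    rw [Finset.disjoint_left]
    intro u hu hu'
    obtain ⟨v, hv, hvu⟩ := Finset.mem_image.1 hu
    obtain ⟨w, hw, hwu⟩ := Finset.mem_image.1 hu'
    have : v = w := hφinj v (hmemS f hf v hv) w (hmemS g hg w hw) (by rw [hvu, hwu])
    subst this
    exact Finset.disjoint_left.1 (hMd f hf g hg hne) hv hw
  set M' := M.image ψ with hM'
  have hM'card : M'.card = k₀ := by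
    rw [hM', Finset.card_image_of_injOn, hMcard]
    intro f hf g hg hfg
    by_contra hne
    obtain ⟨x, hx⟩ := Finset.card_pos.1 (by rw [(hMG f hf).2.1]; omega : 0 < f.card)
    have hxψ : φ x ∈ ψ f := Finset.mem_image_of_mem φ hx
    exact Finset.disjoint_left.1 (hψdisj f hf g hg hne) hxψ (hfg ▸ hxψ)
  -- the augmented matching
  have he₀notin : ({r + 1, c} : Finset ℕ) ∉ M' := by
    intro hmem
    obtain ⟨f, hf, hfe⟩ := Finset.mem_image.1 hmem
    have : r + 1 ∈ ψ f := by rw [hfe]; simp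
    have := (hψmem f hf _ this).1
    omega
  set W : Finset (Finset ℕ) := insert {r + 1, c} M' with hW
  have hWcard : W.card = k₀ + 1 := by
    rw [hW, Finset.card_insert_of_notMem he₀notin, hM'card]
  have hWsub : W ⊆ del G r := by
    intro f hf
    rw [hW, Finset.mem_insert] at hf
    rcases hf with rfl | hf
    · rw [del, Finset.mem_filter]
      refine ⟨he₀, Finset.disjoint_left.2 fun u hu hu' => ?_⟩
      simp only [Finset.mem_insert, Finset.mem_singleton] at hu
      rw [Finset.mem_Icc] at hu'
      rcases hu with rfl | rfl <;> omega
    · obtain ⟨g, hg, rfl⟩ := Finset.mem_image.1 hf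
      exact hψG g hg
  have hWd : ∀ f ∈ W, ∀ g ∈ W, f ≠ g → Disjoint f g := by
    have key : ∀ g ∈ M', Disjoint ({r + 1, c} : Finset ℕ) g := by
      intro g hg
      obtain ⟨g₀, hg₀, rfl⟩ := Finset.mem_image.1 hg
      rw [Finset.disjoint_left]
      intro u hu hu'
      simp only [Finset.mem_insert, Finset.mem_singleton] at hu
      have := hψmem g₀ hg₀ u hu'
      rcases hu with rfl | rfl <;> omega
    intro f hf g hg hne
    rw [hW, Finset.mem_insert] at hf hg
    rcases hf with rfl | hf
    · rcases hg with rfl | hg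
      · exact absurd rfl hne
      · exact key g hg
    · rcases hg with rfl | hg
      · exact (key f hf).symm
      · obtain ⟨f₀, hf₀, rfl⟩ := Finset.mem_image.1 hf
        obtain ⟨g₀, hg₀, rfl⟩ := Finset.mem_image.1 hg
        exact hψdisj f₀ hf₀ g₀ hg₀ (fun h => hne (by rw [h]))
  have := le_matchNum hWsub hWd
  rw [hWcard, ← hk₀] at this
  omega
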